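/- Let L : M × [0,B] → ℝ be a function that is affine in its second argument, i.e., L(μ,λ) = R(μ) + λ·g(μ) for functions R, g : M → ℝ. Given μ_1,…,μ_K ∈ M, λ_1,…,λ_K ∈ [0,B], and a mixed policy μ̄ that averages the μ_k (so that R(μ̄) = (1/K)∑_k R(μ_k) and g(μ̄) = (1/K)∑_k g(μ_k)), suppose (i) L(μ_k, λ_k) ≥ L(μ, λ_k) for all μ and all k, and (ii) (1/K)∑_k L(μ_k, λ_k) ≤ inf_{λ∈[0,B]} (1/K)∑_k L(μ_k, λ) + ρ for some ρ ≥ 0. Then inf_{λ∈[0,B]} sup_μ L(μ,λ) ≤ inf_{λ∈[0,B]} L(μ̄,λ) + ρ. -/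
import Mathlib


/-- no-regret play with best responses bounds the inf-sup value by the value
of the averaged policy. -/
theorem stmt_8 {M : Type*} [Nonempty M] (B : ℝ) (hB : 0 < B)
    (R g : M → ℝ) (hRb : ∃ K, ∀ μ, |R μ| ≤ K) (hgb : ∃ K, ∀ μ, |g μ| ≤ K)
    (L : M → ℝ → ℝ) (hL : ∀ μ lam, L μ lam = R μ + lam * g μ)
    (K : ℕ) (hK : 1 ≤ K)
    (μs : Fin K → M) (lams : Fin K → ℝ) (hlams : ∀ k, lams k ∈ Set.Icc (0 : ℝ) B)
    (μbar : M)
    (hRavg : R μbar = (1 / (K : ℝ)) * ∑ k, R (μs k))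
    (hgavg : g μbar = (1 / (K : ℝ)) * ∑ k, g (μs k))
    (ρ : ℝ) (hρ : 0 ≤ ρ)
    (hbr : ∀ (μ : M) (k : Fin K), L μ (lams k) ≤ L (μs k) (lams k))
    (hreg : (1 / (K : ℝ)) * ∑ k, L (μs k) (lams k) ≤
      (⨅ lam : Set.Icc (0 : ℝ) B, (1 / (K : ℝ)) * ∑ k, L (μs k) (lam : ℝ)) + ρ) :
    (⨅ lam : Set.Icc (0 : ℝ) B, ⨆ μ, L μ (lam : ℝ)) ≤
      (⨅ lam : Set.Icc (0 : ℝ) B, L μbar (lam : ℝ)) + ρ := by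
  obtain ⟨KR, hKR⟩ := hRb
  obtain ⟨Kg, hKg⟩ := hgb
  set C := KR + B * Kg with hC
  have hbound : ∀ (μ : M) (lam : ℝ), lam ∈ Set.Icc (0 : ℝ) B → |L μ lam| ≤ C := by
    intro μ lam hlam
    rw [hL]
    have h1 := hKR μ; have h2 := hKg μ
    have hl : |lam| ≤ B := by rw [abs_of_nonneg hlam.1]; exact hlam.2
    calc |R μ + lam * g μ| ≤ |R μ| + |lam * g μ| := abs_add_le _ _
      _ = |R μ| + |lam| * |g μ| := by rw [abs_mul]
      _ ≤ KR + B * Kg := by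
          have := abs_nonneg (g μ)
          have := abs_nonneg lam
          nlinarith
  have hbdd : ∀ lam ∈ Set.Icc (0 : ℝ) B, BddAbove (Set.range fun μ => L μ lam) := by
    intro lam hlam
    exact ⟨C, by rintro x ⟨μ, rfl⟩; exact (abs_le.mp (hbound μ lam hlam)).2⟩
  have hsup : ∀ k, (⨆ μ, L μ (lams k)) = L (μs k) (lams k) := by
    intro k
    exact le_antisymm (ciSup_le fun μ => hbr μ k) (le_ciSup (hbdd _ (hlams k)) _)
  have hbelow : BddBelow (Set.range fun lam : Set.Icc (0 : ℝ) B => ⨆ μ, L μ (lam : ℝ)) := by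
    refine ⟨-C, ?_⟩
    rintro x ⟨lam, rfl⟩
    obtain ⟨μ0⟩ := ‹Nonempty M›
    calc -C ≤ L μ0 (lam : ℝ) := (abs_le.mp (hbound μ0 lam lam.2)).1
      _ ≤ _ := le_ciSup (hbdd _ lam.2) _
  set I := (⨅ lam : Set.Icc (0 : ℝ) B, ⨆ μ, L μ (lam : ℝ)) with hI
  have hK0 : (0 : ℝ) < (K : ℝ) := by exact_mod_cast hK
  have h1 : ∀ k, I ≤ L (μs k) (lams k) := fun k =>
    (hsup k) ▸ ciInf_le hbelow (⟨lams k, hlams k⟩ : Set.Icc (0 : ℝ) B)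
  have step1 : I ≤ (1 / (K : ℝ)) * ∑ k, L (μs k) (lams k) := by
    have h2 : (K : ℝ) * I ≤ ∑ k, L (μs k) (lams k) := by
      calc (K : ℝ) * I = ∑ _k : Fin K, I := by
            simp [Finset.sum_const, mul_comm]
        _ ≤ _ := Finset.sum_le_sum fun k _ => h1 k
    have hKne : (K : ℝ) ≠ 0 := ne_of_gt hK0
    calc I = 1 / (K : ℝ) * ((K : ℝ) * I) := by field_simp
      _ ≤ _ := mul_le_mul_of_nonneg_left h2 (by positivity)
  have hfun : ∀ lam : ℝ, (1 / (K : ℝ)) * ∑ k, L (μs k) lam = L μbar lam := by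
    intro lam
    rw [hL, hRavg, hgavg,
      show (∑ k, L (μs k) lam) = ∑ k, (R (μs k) + lam * g (μs k)) from
        Finset.sum_congr rfl fun k _ => hL _ _,
      Finset.sum_add_distrib, ← Finset.mul_sum]
    ring
  have hreg' : (1 / (K : ℝ)) * ∑ k, L (μs k) (lams k) ≤
      (⨅ lam : Set.Icc (0 : ℝ) B, L μbar (lam : ℝ)) + ρ := by
    have : (⨅ lam : Set.Icc (0 : ℝ) B, (1 / (K : ℝ)) * ∑ k, L (μs k) (lam : ℝ)) =
        ⨅ lam : Set.Icc (0 : ℝ) B, L μbar (lam : ℝ) := by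
      exact iInf_congr fun lam => hfun (lam : ℝ)
    rwa [this] at hreg
  linarith
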